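/- For all p ∈ [1, 2] and all positive reals x, y, one has (4/p)(x^{p/2} - y^{p/2})² ≤ (x - y)(Φ_p'(x) - Φ_p'(y)), where Φ_p'(s) = p(s^{p-1} - 1)/(p - 1) for p > 1 and Φ_1'(s) = log s. -/

import Mathlib

open Real
open intervalIntegral

lemma cs_int (a b : ℝ) (hab : a < b) (f : ℝ → ℝ)
    (h1 : IntervalIntegrable f MeasureTheory.volume a b)
    (h2 : IntervalIntegrable (fun s => f s ^ 2) MeasureTheory.volume a b) :
    (∫ s in a..b, f s) ^ 2 ≤ (b - a) * ∫ s in a..b, f s ^ 2 := by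
  set I := ∫ s in a..b, f s with hI
  set J := ∫ s in a..b, f s ^ 2 with hJ
  have hba : (0:ℝ) < b - a := by linarith
  set c : ℝ := I / (b - a) with hc
  have key : (0:ℝ) ≤ ∫ s in a..b, (f s - c) ^ 2 :=
    intervalIntegral.integral_nonneg hab.le (fun s _ => sq_nonneg _)
  have expand : (∫ s in a..b, (f s - c) ^ 2) = J - 2 * c * I + c ^ 2 * (b - a) := by
    have heq : ∀ s, (f s - c) ^ 2 = (f s ^ 2 - (2 * c) * f s) + c ^ 2 := by
      intro s; ring
    simp_rw [heq]
    rw [intervalIntegral.integral_add (h2.sub (h1.const_mul _)) intervalIntegrable_const,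
      intervalIntegral.integral_sub h2 (h1.const_mul _),
      intervalIntegral.integral_const_mul, intervalIntegral.integral_const]
    simp [smul_eq_mul]
    ring
  rw [expand] at key
  have hcI : c * (b - a) = I := by rw [hc]; exact div_mul_cancel₀ I hba.ne'
  nlinarith [sq_nonneg (I - c * (b - a)), sq_nonneg c]

/-- Derivative of the entropy generator: `Φ₁'(s) = log s` and
`Φ_p'(s) = p (s^(p-1) - 1)/(p-1)` for `p ≠ 1`. -/
noncomputable def PhiDeriv (p s : ℝ) : ℝ :=
  if p = 1 then Real.log s else p * (s ^ (p - 1) - 1) / (p - 1)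

lemma core (p x y : ℝ) (hp1 : 1 ≤ p) (hp2 : p ≤ 2) (hy : 0 < y) (hxy : y < x) :
    (4 / p) * (x ^ (p / 2) - y ^ (p / 2)) ^ 2 ≤
      (x - y) * (PhiDeriv p x - PhiDeriv p y) := by
  have hx : 0 < x := hy.trans hxy
  have hp0 : 0 < p := by linarith
  have h0 : (0:ℝ) ∉ Set.uIcc y x := by
    rw [Set.uIcc_of_le hxy.le]
    intro h
    exact absurd (Set.mem_Icc.mp h).1 (not_le.mpr hy)
  -- the two integrands
  have hInt1 : IntervalIntegrable (fun s : ℝ => s ^ (p / 2 - 1)) MeasureTheory.volume y x :=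
    intervalIntegral.intervalIntegrable_rpow (Or.inr h0)
  have hsq : ∀ s ∈ Set.uIcc y x, (fun s : ℝ => (s ^ (p / 2 - 1)) ^ 2) s
      = (fun s : ℝ => s ^ (p - 2)) s := by
    intro s hs
    have hs0 : 0 < s := by
      rw [Set.uIcc_of_le hxy.le] at hs
      exact lt_of_lt_of_le hy hs.1
    simp only
    rw [← Real.rpow_natCast (s ^ (p / 2 - 1)) 2, ← Real.rpow_mul hs0.le]
    norm_num
    ring_nf
  have hInt2 : IntervalIntegrable (fun s : ℝ => (s ^ (p / 2 - 1)) ^ 2) MeasureTheory.volume y x := by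
    apply ContinuousOn.intervalIntegrable
    apply ContinuousOn.pow
    apply ContinuousOn.rpow_const continuousOn_id
    intro s hs
    have hs0 : 0 < s := by
      rw [Set.uIcc_of_le hxy.le] at hs
      exact lt_of_lt_of_le hy hs.1
    exact Or.inl hs0.ne'
  have hI : (∫ s in y..x, s ^ (p / 2 - 1)) = (x ^ (p / 2) - y ^ (p / 2)) / (p / 2) := by
    rw [integral_rpow (Or.inr ⟨by intro h; nlinarith [hp0], h0⟩)]
    norm_num
  have hJeq : (∫ s in y..x, (s ^ (p / 2 - 1)) ^ 2) = ∫ s in y..x, s ^ (p - 2) :=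
    intervalIntegral.integral_congr hsq
  have hCS := cs_int y x hxy _ hInt1 hInt2
  rw [hI, hJeq] at hCS
  by_cases hp : p = 1
  · subst hp
    have hJ : (∫ s in y..x, s ^ ((1:ℝ) - 2)) = Real.log x - Real.log y := by
      rw [intervalIntegral.integral_congr (g := fun s : ℝ => s⁻¹) ?_]
      · rw [integral_inv h0, Real.log_div hx.ne' hy.ne']
      · intro s hs
        have hs0 : 0 < s := by
          rw [Set.uIcc_of_le hxy.le] at hs
          exact lt_of_lt_of_le hy hs.1
        simp only
        rw [show (1:ℝ) - 2 = -1 by norm_num, Real.rpow_neg_one]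
    rw [hJ] at hCS
    simp only [PhiDeriv, if_pos rfl]
    norm_num at hCS ⊢
    nlinarith [hCS]
  · have hp1' : 1 < p := lt_of_le_of_ne hp1 (Ne.symm hp)
    have hJ : (∫ s in y..x, s ^ (p - 2)) = (x ^ (p - 1) - y ^ (p - 1)) / (p - 1) := by
      rw [integral_rpow (Or.inr ⟨by intro h; nlinarith, h0⟩), show p - 2 + 1 = p - 1 by ring]
    rw [hJ] at hCS
    simp only [PhiDeriv, if_neg hp]
    have hpm : 0 < p - 1 := by linarith
    set U := x ^ (p / 2); set V := y ^ (p / 2)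
    set X := x ^ (p - 1); set Y := y ^ (p - 1)
    have h1 : ((U - V) / (p / 2)) ^ 2 = 4 * (U - V) ^ 2 / p ^ 2 := by
      field_simp; ring
    rw [h1] at hCS
    have hCS' : 4 * (U - V) ^ 2 * (p - 1) ≤ (x - y) * (X - Y) * p ^ 2 := by
      have h := mul_le_mul_of_nonneg_right hCS (by positivity : (0:ℝ) ≤ p ^ 2 * (p - 1))
      have e1 : 4 * (U - V) ^ 2 / p ^ 2 * (p ^ 2 * (p - 1)) = 4 * (U - V) ^ 2 * (p - 1) := by
        field_simp
      have e2 : (x - y) * ((X - Y) / (p - 1)) * (p ^ 2 * (p - 1)) = (x - y) * (X - Y) * p ^ 2 := by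
        field_simp
      rw [e1, e2] at h
      exact h
    have egoal : (x - y) * (p * (X - 1) / (p - 1) - p * (Y - 1) / (p - 1))
        = (x - y) * (X - Y) * p / (p - 1) := by
      field_simp
      ring
    rw [egoal, div_mul_eq_mul_div, div_le_div_iff₀ hp0 hpm]
    nlinarith [hCS']

theorem phi_deriv_ineq (p x y : ℝ) (hp : p ∈ Set.Icc (1 : ℝ) 2)
    (hx : 0 < x) (hy : 0 < y) :
    (4 / p) * (x ^ (p / 2) - y ^ (p / 2)) ^ 2 ≤
      (x - y) * (PhiDeriv p x - PhiDeriv p y) := by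
  obtain ⟨hp1, hp2⟩ := hp
  rcases lt_trichotomy y x with h | h | h
  · exact core p x y hp1 hp2 hy h
  · subst h
    simp
  · have hmain := core p y x hp1 hp2 hx h
    have e1 : (y ^ (p / 2) - x ^ (p / 2)) ^ 2 = (x ^ (p / 2) - y ^ (p / 2)) ^ 2 := by ring
    have e2 : (y - x) * (PhiDeriv p y - PhiDeriv p x)
        = (x - y) * (PhiDeriv p x - PhiDeriv p y) := by ring
    rw [e1, e2] at hmain
    exact hmain
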